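/- Let N ≥ 2, let a ∈ ℝ, and let L_p and L_c be real symmetric N×N matrices with L_p·𝟏 = 0 and L_c·𝟏 = 0 (𝟏 the all-ones vector). Suppose there are reals λpmin ≤ λpmax and 0 < λcmin ≤ λcmax such that for every v ∈ ℝ^N orthogonal to 𝟏: λpmin·‖v‖² ≤ vᵀL_p v ≤ λpmax·‖v‖² and λcmin·‖v‖² ≤ vᵀL_c v ≤ λcmax·‖v‖². Set γc = λcmax/λcmin and Δp = λpmax − λpmin. If λpmin > a − 1 and (γc − 1)(1 − a + λpmin) < γc(2 − Δp), then there exists k ≥ 0 with (−1 − a + λpmax)/λcmin < k < (1 − a + λpmin)/λcmax, and for any such k the matrix powers (a·I_N − L_p + k·L_c)^t composed with the projection I_N − (1/N)·𝟏𝟏ᵀ converge to the zero matrix as t → ∞. -/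

import Mathlib

open Matrix Finset

set_option maxHeartbeats 1600000 in
theorem stmt_2 (N : ℕ) (hN : 2 ≤ N) (a : ℝ)
    (Lp Lc : Matrix (Fin N) (Fin N) ℝ)
    (hLpsymm : Lp.IsSymm) (hLcsymm : Lc.IsSymm)
    (hLp1 : Lp *ᵥ (fun _ => (1 : ℝ)) = 0) (hLc1 : Lc *ᵥ (fun _ => (1 : ℝ)) = 0)
    (lpmin lpmax lcmin lcmax : ℝ) (hp : lpmin ≤ lpmax)
    (hc0 : 0 < lcmin) (hc : lcmin ≤ lcmax)
    (hqp : ∀ v : Fin N → ℝ, (∑ i, v i) = 0 →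
      lpmin * (v ⬝ᵥ v) ≤ v ⬝ᵥ (Lp *ᵥ v) ∧ v ⬝ᵥ (Lp *ᵥ v) ≤ lpmax * (v ⬝ᵥ v))
    (hqc : ∀ v : Fin N → ℝ, (∑ i, v i) = 0 →
      lcmin * (v ⬝ᵥ v) ≤ v ⬝ᵥ (Lc *ᵥ v) ∧ v ⬝ᵥ (Lc *ᵥ v) ≤ lcmax * (v ⬝ᵥ v))
    (γc Δp : ℝ) (hγ : γc = lcmax / lcmin) (hΔ : Δp = lpmax - lpmin)
    (hC1a : lpmin > a - 1) (hC1b : (γc - 1) * (1 - a + lpmin) < γc * (2 - Δp)) :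
    (∃ k : ℝ, 0 ≤ k ∧ (-1 - a + lpmax) / lcmin < k ∧ k < (1 - a + lpmin) / lcmax) ∧
    ∀ k : ℝ, 0 ≤ k → (-1 - a + lpmax) / lcmin < k → k < (1 - a + lpmin) / lcmax →
      Filter.Tendsto
        (fun t : ℕ => (a • (1 : Matrix (Fin N) (Fin N) ℝ) - Lp + k • Lc) ^ t *
          ((1 : Matrix (Fin N) (Fin N) ℝ) - (N : ℝ)⁻¹ • Matrix.of fun _ _ => (1 : ℝ)))
        Filter.atTop (nhds 0) := by
  have hcmax : 0 < lcmax := lt_of_lt_of_le hc0 hc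
  have hY : 0 < 1 - a + lpmin := by linarith
  -- the key cross-multiplied inequality
  have key : (-1 - a + lpmax) * lcmax < (1 - a + lpmin) * lcmin := by
    rw [hγ, hΔ] at hC1b
    have h := mul_lt_mul_of_pos_right hC1b hc0
    have hne : lcmin ≠ 0 := ne_of_gt hc0
    field_simp at h
    nlinarith [h]
  have hLU : (-1 - a + lpmax) / lcmin < (1 - a + lpmin) / lcmax := by
    rw [div_lt_div_iff₀ hc0 hcmax]; linarith
  have hU0 : 0 < (1 - a + lpmin) / lcmax := div_pos hY hcmax
  constructor
  · refine ⟨max (((-1 - a + lpmax) / lcmin + (1 - a + lpmin) / lcmax) / 2) 0,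
      le_max_right _ _, ?_, ?_⟩
    · exact lt_max_iff.mpr (Or.inl (by linarith))
    · exact max_lt (by linarith) hU0
  · intro k hk0 hkL hkU
    set A := a • (1 : Matrix (Fin N) (Fin N) ℝ) - Lp + k • Lc with hAdef
    have hAsymm : Aᵀ = A := by
      simp only [hAdef, Matrix.transpose_add, Matrix.transpose_sub, Matrix.transpose_smul,
        Matrix.transpose_one, hLpsymm.eq, hLcsymm.eq]
    have hA1 : A *ᵥ (fun _ => (1 : ℝ)) = a • (fun _ => (1 : ℝ)) := by
      simp [hAdef, Matrix.add_mulVec, Matrix.sub_mulVec, Matrix.smul_mulVec,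
        hLp1, hLc1, Matrix.one_mulVec]
    -- A preserves the sum-zero subspace
    have hsum : ∀ v : Fin N → ℝ, (∑ i, v i) = 0 → ∑ i, (A *ᵥ v) i = 0 := by
      intro v hv
      have h1 : ∑ i, (A *ᵥ v) i = (fun _ => (1 : ℝ)) ⬝ᵥ (A *ᵥ v) := by
        simp [dotProduct]
      rw [h1, Matrix.dotProduct_mulVec, ← hAsymm, Matrix.vecMul_transpose, hA1]
      simp [smul_dotProduct, dotProduct, ← Finset.mul_sum, hv]
    have hQform : ∀ v : Fin N → ℝ,
        v ⬝ᵥ (A *ᵥ v) = a * (v ⬝ᵥ v) - v ⬝ᵥ (Lp *ᵥ v) + k * (v ⬝ᵥ (Lc *ᵥ v)) := by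
      intro v
      simp [hAdef, Matrix.add_mulVec, Matrix.sub_mulVec, Matrix.smul_mulVec,
        Matrix.one_mulVec, dotProduct_add, dotProduct_sub, dotProduct_smul, smul_eq_mul]
    set ρ := max (max (a - lpmin + k * lcmax) (-(a - lpmax + k * lcmin))) 0 with hρdef
    have hρ0 : 0 ≤ ρ := le_max_right _ _
    have hρ1 : ρ < 1 := by
      apply max_lt (max_lt ?_ ?_) one_pos
      · have : k * lcmax < 1 - a + lpmin := (lt_div_iff₀ hcmax).mp hkU
        linarith
      · have : -1 - a + lpmax < k * lcmin := (div_lt_iff₀ hc0).mp hkL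
        linarith
    have hdnn : ∀ v : Fin N → ℝ, 0 ≤ v ⬝ᵥ v :=
      fun v => Finset.sum_nonneg fun i _ => mul_self_nonneg (v i)
    -- Rayleigh quotient bound on the sum-zero subspace
    have hQ : ∀ v : Fin N → ℝ, (∑ i, v i) = 0 →
        |v ⬝ᵥ (A *ᵥ v)| ≤ ρ * (v ⬝ᵥ v) := by
      intro v hv
      obtain ⟨hp1, hp2⟩ := hqp v hv
      obtain ⟨hc1, hc2⟩ := hqc v hv
      have hvv := hdnn v
      rw [abs_le, hQform]
      have hb1 : (a - lpmin + k * lcmax) * (v ⬝ᵥ v) ≤ ρ * (v ⬝ᵥ v) :=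
        mul_le_mul_of_nonneg_right (le_trans (le_max_left _ _) (le_max_left _ _)) hvv
      have hb2 : (-(a - lpmax + k * lcmin)) * (v ⬝ᵥ v) ≤ ρ * (v ⬝ᵥ v) :=
        mul_le_mul_of_nonneg_right (le_trans (le_max_right _ _) (le_max_left _ _)) hvv
      have hk1 : k * (v ⬝ᵥ (Lc *ᵥ v)) ≤ k * (lcmax * (v ⬝ᵥ v)) :=
        mul_le_mul_of_nonneg_left hc2 hk0
      have hk2 : k * (lcmin * (v ⬝ᵥ v)) ≤ k * (v ⬝ᵥ (Lc *ᵥ v)) :=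
        mul_le_mul_of_nonneg_left hc1 hk0
      constructor
      · nlinarith
      · nlinarith
    have h2ρ : 0 < 2 - ρ := by linarith
    set c := ρ / (2 - ρ) with hcdef
    have hcnn : 0 ≤ c := div_nonneg hρ0 (le_of_lt h2ρ)
    have hclt1 : c < 1 := by rw [hcdef, div_lt_one h2ρ]; linarith
    -- the contraction estimate
    have hcontr : ∀ v : Fin N → ℝ, (∑ i, v i) = 0 →
        (A *ᵥ v) ⬝ᵥ (A *ᵥ v) ≤ c * (v ⬝ᵥ v) := by
      intro v hv
      set u := A *ᵥ v with hu
      have hus : ∑ i, u i = 0 := hsum v hv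
      have e1 : u ⬝ᵥ (A *ᵥ v) = u ⬝ᵥ u := by rw [← hu]
      have hcross : v ⬝ᵥ (A *ᵥ u) = u ⬝ᵥ u := by
        rw [Matrix.dotProduct_mulVec, ← hAsymm, Matrix.vecMul_transpose, ← hu]
      have h1 := (abs_le.mp (hQ (u + v) (by
        simp [Pi.add_apply, Finset.sum_add_distrib, hus, hv]))).2
      have h2 := (abs_le.mp (hQ (u - v) (by
        simp [Pi.sub_apply, Finset.sum_sub_distrib, hus, hv]))).1
      have hplus : (u + v) ⬝ᵥ (A *ᵥ (u + v)) =
          u ⬝ᵥ (A *ᵥ u) + 2 * (u ⬝ᵥ u) + v ⬝ᵥ (A *ᵥ v) := by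
        rw [Matrix.mulVec_add, dotProduct_add, add_dotProduct, add_dotProduct, e1, hcross]
        ring
      have hminus : (u - v) ⬝ᵥ (A *ᵥ (u - v)) =
          u ⬝ᵥ (A *ᵥ u) - 2 * (u ⬝ᵥ u) + v ⬝ᵥ (A *ᵥ v) := by
        rw [Matrix.mulVec_sub, dotProduct_sub, sub_dotProduct, sub_dotProduct, e1, hcross]
        ring
      have nplus : (u + v) ⬝ᵥ (u + v) = u ⬝ᵥ u + 2 * (u ⬝ᵥ v) + v ⬝ᵥ v := by
        rw [dotProduct_add, add_dotProduct, add_dotProduct, dotProduct_comm v u]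
        ring
      have nminus : (u - v) ⬝ᵥ (u - v) = u ⬝ᵥ u - 2 * (u ⬝ᵥ v) + v ⬝ᵥ v := by
        rw [dotProduct_sub, sub_dotProduct, sub_dotProduct, dotProduct_comm v u]
        ring
      rw [hplus, nplus] at h1
      rw [hminus, nminus] at h2
      rw [hcdef, div_mul_eq_mul_div, le_div_iff₀ h2ρ]
      linarith [h1, h2]
    -- reduce to entrywise convergence
    refine tendsto_pi_nhds.mpr ?_
    intro i
    rw [tendsto_pi_nhds]
    intro j
    set P := (1 : Matrix (Fin N) (Fin N) ℝ) - (N : ℝ)⁻¹ • Matrix.of fun _ _ => (1 : ℝ)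
      with hPdef
    set w : Fin N → ℝ := fun l => P l j with hwdef
    have hNne : (N : ℝ) ≠ 0 := Nat.cast_ne_zero.mpr (by omega)
    have hw0 : ∑ l, w l = 0 := by
      simp [hwdef, hPdef, Matrix.sub_apply, Matrix.smul_apply, Matrix.one_apply,
        Finset.sum_sub_distrib, Finset.sum_ite_eq]
      field_simp
      simp
    have hentry : ∀ t : ℕ, (A ^ t * P) i j = (A ^ t *ᵥ w) i := by
      intro t
      simp [Matrix.mul_apply, Matrix.mulVec, dotProduct, hwdef]
    have hiter : ∀ t : ℕ, (∑ l, (A ^ t *ᵥ w) l = 0) ∧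
        (A ^ t *ᵥ w) ⬝ᵥ (A ^ t *ᵥ w) ≤ c ^ t * (w ⬝ᵥ w) := by
      intro t
      induction t with
      | zero =>
        constructor
        · simpa [Matrix.one_mulVec] using hw0
        · simp [Matrix.one_mulVec]
      | succ t ih =>
        have hstep : A ^ (t + 1) *ᵥ w = A *ᵥ (A ^ t *ᵥ w) := by
          rw [pow_succ', ← Matrix.mulVec_mulVec]
        constructor
        · rw [hstep]; exact hsum _ ih.1
        · rw [hstep]
          calc (A *ᵥ (A ^ t *ᵥ w)) ⬝ᵥ (A *ᵥ (A ^ t *ᵥ w))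
              ≤ c * ((A ^ t *ᵥ w) ⬝ᵥ (A ^ t *ᵥ w)) := hcontr _ ih.1
            _ ≤ c * (c ^ t * (w ⬝ᵥ w)) := mul_le_mul_of_nonneg_left ih.2 hcnn
            _ = c ^ (t + 1) * (w ⬝ᵥ w) := by ring
    have hbound : ∀ t : ℕ, ‖(A ^ t * P) i j‖ ≤ Real.sqrt (c ^ t * (w ⬝ᵥ w)) := by
      intro t
      have h1 : ((A ^ t *ᵥ w) i) ^ 2 ≤ (A ^ t *ᵥ w) ⬝ᵥ (A ^ t *ᵥ w) := by
        have := Finset.single_le_sum (f := fun l => (A ^ t *ᵥ w) l * (A ^ t *ᵥ w) l)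
          (fun l _ => mul_self_nonneg _) (Finset.mem_univ i)
        simpa [dotProduct, sq] using this
      have h2 : ((A ^ t *ᵥ w) i) ^ 2 ≤ c ^ t * (w ⬝ᵥ w) := le_trans h1 (hiter t).2
      rw [hentry t, Real.norm_eq_abs, ← Real.sqrt_sq_eq_abs]
      exact Real.sqrt_le_sqrt h2
    apply squeeze_zero_norm hbound
    have hg : Filter.Tendsto (fun t : ℕ => c ^ t * (w ⬝ᵥ w)) Filter.atTop (nhds 0) := by
      have := (tendsto_pow_atTop_nhds_zero_of_lt_one hcnn hclt1).mul_const (w ⬝ᵥ w)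
      simpa using this
    have := (Real.continuous_sqrt.tendsto 0).comp hg
    simpa [Function.comp_def] using this
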